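/- Let t be a real number with 0 < t ≤ 1/2 and let G be a connected t-tough graph. Then the graph B(G) is 2t-tough, i.e., ω(B(G)−S') ≤ |S'|/(2t) holds for every cutset S' of B(G). -/

import Mathlib

open SimpleGraph
open scoped ENNReal

namespace Toughness

variable {V : Type*}

/-- Number of connected components of the graph obtained from `G` by deleting the vertex set `S`. -/
noncomputable def numComp (G : SimpleGraph V) (S : Set V) : ℕ :=
  Nat.card (G.induce Sᶜ).ConnectedComponent

/-- `S` is a cutset of `G`: deleting it leaves more than one connected component. -/
def IsCutset (G : SimpleGraph V) (S : Set V) : Prop :=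
  1 < numComp G S

/-- `G` is `t`-tough: every cutset `S` satisfies `t · ω(G−S) ≤ |S|`. -/
def IsTough (t : ℝ) (G : SimpleGraph V) : Prop :=
  ∀ S : Set V, IsCutset G S → t * (numComp G S : ℝ) ≤ (S.ncard : ℝ)

/-- The toughness of `G`: the infimum of `|S| / ω(G−S)` over all cutsets `S`,
with value `∞` when there is no cutset (e.g. for complete graphs). -/
noncomputable def toughness (G : SimpleGraph V) : ℝ≥0∞ :=
  ⨅ (S : Set V) (_ : IsCutset G S), (S.ncard : ℝ≥0∞) / (numComp G S : ℝ≥0∞)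

/-- The bipartite graph `B(G)`: two copies `(v, false)` and `(v, true)` of every vertex `v` of
`G`, with `(u, false)` adjacent to `(v, true)` if and only if `u = v` or `uv ∈ E(G)`. -/
def BGraph (G : SimpleGraph V) : SimpleGraph (V × Bool) :=
  SimpleGraph.fromRel (fun p q => p.2 ≠ q.2 ∧ (p.1 = q.1 ∨ G.Adj p.1 q.1))

/-! ### Auxiliary definitions for the proof -/

/-- The set of vertices both of whose copies lie in `S'`. -/
private def Wset (S' : Set (V × Bool)) : Set V :=
  {v | (v, false) ∈ S' ∧ (v, true) ∈ S'}

/-- The set of vertices exactly one of whose copies lies in `S'`. -/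
private def Hset (S' : Set (V × Bool)) : Set V :=
  {v | ((v, false) ∈ S' ∨ (v, true) ∈ S') ∧ v ∉ Wset S'}

private lemma not_mem_S' {S' : Set (V × Bool)} {v : V} (hW : v ∉ Wset S')
    (hH : v ∉ Hset S') (b : Bool) : (v, b) ∉ S' := by
  intro hb
  apply hH
  refine ⟨?_, hW⟩
  cases b
  · exact Or.inl hb
  · exact Or.inr hb

private lemma bgraph_adj (G : SimpleGraph V) {p q : V × Bool} (hne2 : p.2 ≠ q.2)
    (h : p.1 = q.1 ∨ G.Adj p.1 q.1) : (BGraph G).Adj p q := by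
  rw [BGraph, fromRel_adj]
  exact ⟨fun he => hne2 (by rw [he]), Or.inl ⟨hne2, h⟩⟩

section WithS'

variable (G : SimpleGraph V) (S' : Set (V × Bool))

private lemma sameComp (p q : ↥S'ᶜ) (h : (p : V × Bool).1 = (q : V × Bool).1) :
    ((BGraph G).induce S'ᶜ).connectedComponentMk p =
      ((BGraph G).induce S'ᶜ).connectedComponentMk q := by
  by_cases h2 : (p : V × Bool).2 = (q : V × Bool).2
  · congr 1
    exact Subtype.ext (Prod.ext h h2)
  · exact ConnectedComponent.sound (Adj.reachable (bgraph_adj G h2 (Or.inl h)))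

private lemma adjComp (p q : ↥S'ᶜ) (hadj : G.Adj (p : V × Bool).1 (q : V × Bool).1)
    (h2 : (p : V × Bool).2 ≠ (q : V × Bool).2) :
    ((BGraph G).induce S'ᶜ).connectedComponentMk p =
      ((BGraph G).induce S'ᶜ).connectedComponentMk q :=
  ConnectedComponent.sound (Adj.reachable (bgraph_adj G h2 (Or.inr hadj)))

/-- The projection of a surviving vertex of `B(G)` to a vertex of `G − W`. -/
private def phi (p : ↥S'ᶜ) : ↥(Wset S')ᶜ :=
  ⟨(p : V × Bool).1, by
    obtain ⟨⟨v, b⟩, hp⟩ := p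
    intro hW
    cases b
    · exact hp hW.1
    · exact hp hW.2⟩

private lemma fstep (p q : ↥S'ᶜ) (h : ((BGraph G).induce S'ᶜ).Adj p q) :
    (G.induce (Wset S')ᶜ).connectedComponentMk (phi S' p) =
      (G.induce (Wset S')ᶜ).connectedComponentMk (phi S' q) := by
  have h' : (BGraph G).Adj ↑p ↑q := h
  rw [BGraph, fromRel_adj] at h'
  obtain ⟨-, h'⟩ := h'
  have hor : (p : V × Bool).1 = (q : V × Bool).1 ∨ G.Adj (p : V × Bool).1 (q : V × Bool).1 := by
    rcases h' with ⟨-, h''⟩ | ⟨-, h''⟩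
    · exact h''
    · rcases h'' with he | ha
      · exact Or.inl he.symm
      · exact Or.inr ha.symm
  rcases hor with he | ha
  · congr 1
    exact Subtype.ext he
  · exact ConnectedComponent.sound
      (Adj.reachable (show (G.induce (Wset S')ᶜ).Adj (phi S' p) (phi S' q) from ha))

/-- The projection map on connected components. -/
private noncomputable def fmap :
    ((BGraph G).induce S'ᶜ).ConnectedComponent →
      (G.induce (Wset S')ᶜ).ConnectedComponent :=
  Quot.lift (fun p => (G.induce (Wset S')ᶜ).connectedComponentMk (phi S' p)) (by
    intro p q hreach
    obtain ⟨w⟩ := (hreach : ((BGraph G).induce S'ᶜ).Reachable p q)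
    induction w with
    | nil => rfl
    | cons h w ih => exact (fstep G S' _ _ h).trans ih)

@[simp] private lemma fmap_mk (p : ↥S'ᶜ) :
    fmap G S' (((BGraph G).induce S'ᶜ).connectedComponentMk p) =
      (G.induce (Wset S')ᶜ).connectedComponentMk (phi S' p) := rfl

/-- If a vertex has exactly one copy in `S'`, its surviving copy is unique. -/
private lemma half_unique {v : V} (hv : v ∈ Hset S') (p q : ↥S'ᶜ)
    (hp : (p : V × Bool).1 = v) (hq : (q : V × Bool).1 = v) : p = q := by
  obtain ⟨⟨v₁, b₁⟩, hp'⟩ := p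
  obtain ⟨⟨v₂, b₂⟩, hq'⟩ := q
  simp only at hp hq
  subst hp hq
  apply Subtype.ext
  simp only [Prod.mk.injEq, true_and]
  cases b₁ <;> cases b₂ <;> first
    | rfl
    | (exfalso
       rcases hv.1 with h | h
       · first | exact hp' h | exact hq' h
       · first | exact hp' h | exact hq' h)

/-- Key lemma: an all-full component swallows everything above its projection. -/
private lemma key {x y : ↥(Wset S')ᶜ} (w : (G.induce (Wset S')ᶜ).Walk x y)
    (C : ((BGraph G).induce S'ᶜ).ConnectedComponent)
    (hfull : ∀ r : ↥S'ᶜ, ((BGraph G).induce S'ᶜ).connectedComponentMk r = C →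
      (r : V × Bool).1 ∉ Hset S') :
    ∀ p q : ↥S'ᶜ, (p : V × Bool).1 = ↑x → (q : V × Bool).1 = ↑y →
      ((BGraph G).induce S'ᶜ).connectedComponentMk p = C →
      ((BGraph G).induce S'ᶜ).connectedComponentMk q = C := by
  induction w with
  | nil =>
    intro p q hp1 hq1 hpC
    rw [← hpC]
    exact (sameComp G S' p q (by rw [hp1, hq1])).symm
  | @cons x m y h w ih =>
    intro p q hp1 hq1 hpC
    -- the current vertex x is full
    have hxW : (x : V) ∉ Wset S' := x.2
    have hxH : (x : V) ∉ Hset S' := hp1 ▸ hfull p hpC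
    have hxfull : ∀ b, ((x : V), b) ∉ S' := not_mem_S' hxW hxH
    -- pick a surviving copy of m
    obtain ⟨b, hb⟩ : ∃ b, ((m : V), b) ∉ S' := by
      by_contra hc
      push_neg at hc
      exact m.2 ⟨hc false, hc true⟩
    set q' : ↥S'ᶜ := ⟨((m : V), b), hb⟩ with hq'def
    set p' : ↥S'ᶜ := ⟨((x : V), !b), hxfull (!b)⟩ with hp'def
    have hpp' : ((BGraph G).induce S'ᶜ).connectedComponentMk p =
        ((BGraph G).induce S'ᶜ).connectedComponentMk p' :=
      sameComp G S' p p' (by rw [hp1])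
    have hadj : G.Adj (p' : V × Bool).1 (q' : V × Bool).1 := h
    have hp'q' : ((BGraph G).induce S'ᶜ).connectedComponentMk p' =
        ((BGraph G).induce S'ᶜ).connectedComponentMk q' :=
      adjComp G S' p' q' hadj (by simp [hp'def, hq'def])
    exact ih q' q rfl hq1 (((hpp'.trans hp'q').symm).trans hpC)

end WithS'

private lemma card_S' [Fintype V] (S' : Set (V × Bool)) :
    S'.ncard = 2 * (Wset S').ncard + (Hset S').ncard := by
  classical
  set A : Set V := {v | (v, false) ∈ S'} with hA
  set Bs : Set V := {v | (v, true) ∈ S'} with hBs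
  have hS : S' = ((fun v => (v, false)) '' A) ∪ ((fun v => (v, true)) '' Bs) := by
    ext ⟨v, b⟩
    cases b <;> simp [hA, hBs]
  have hdisj : Disjoint ((fun v : V => (v, false)) '' A) ((fun v : V => (v, true)) '' Bs) := by
    rw [Set.disjoint_left]
    rintro ⟨v, b⟩ h1 h2
    simp only [Set.mem_image, Prod.mk.injEq] at h1 h2
    obtain ⟨-, -, -, hb1⟩ := h1
    obtain ⟨-, -, -, hb2⟩ := h2
    rw [← hb1] at hb2
    exact Bool.false_ne_true hb2.symm
  have hinj1 : Function.Injective (fun v : V => (v, false)) := fun a b h => congrArg Prod.fst h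
  have hinj2 : Function.Injective (fun v : V => (v, true)) := fun a b h => congrArg Prod.fst h
  have h1 : S'.ncard = A.ncard + Bs.ncard := by
    rw [hS, Set.ncard_union_eq hdisj (Set.toFinite _) (Set.toFinite _),
      Set.ncard_image_of_injective _ hinj1, Set.ncard_image_of_injective _ hinj2]
  have hW : Wset S' = A ∩ Bs := rfl
  have hH : Hset S' = (A ∪ Bs) \ (A ∩ Bs) := rfl
  have h2 : (A ∪ Bs).ncard + (A ∩ Bs).ncard = A.ncard + Bs.ncard :=
    Set.ncard_union_add_ncard_inter A Bs (Set.toFinite _) (Set.toFinite _)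
  have h3 : ((A ∪ Bs) \ (A ∩ Bs)).ncard + (A ∩ Bs).ncard = (A ∪ Bs).ncard :=
    Set.ncard_diff_add_ncard_of_subset
      (fun v hv => Set.mem_union_left _ hv.1) (Set.toFinite _)
  rw [h1, hW, hH]
  omega


private lemma boundA [Fintype V] (G : SimpleGraph V) (S' : Set (V × Bool)) :
    numComp (BGraph G) S' ≤ (Hset S').ncard + numComp G (Wset S') := by
  classical
  set IB := (BGraph G).induce S'ᶜ with hIB
  set IG := G.induce (Wset S')ᶜ with hIG
  have hPhi : ∀ C : IB.ConnectedComponent,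
      (∃ p : ↥S'ᶜ, IB.connectedComponentMk p = C ∧ (p : V × Bool).1 ∈ Hset S') ∨ True :=
    fun _ => Or.inr trivial
  let Φ : IB.ConnectedComponent → ↥(Hset S') ⊕ IG.ConnectedComponent := fun C =>
    if h : ∃ p : ↥S'ᶜ, IB.connectedComponentMk p = C ∧ (p : V × Bool).1 ∈ Hset S' then
      Sum.inl ⟨(h.choose : ↥S'ᶜ).1.1, h.choose_spec.2⟩
    else Sum.inr (fmap G S' C)
  have hinj : Function.Injective Φ := by
    intro C₁ C₂ hΦ
    by_cases h₁ : ∃ p : ↥S'ᶜ, IB.connectedComponentMk p = C₁ ∧ (p : V × Bool).1 ∈ Hset S' <;>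
      by_cases h₂ : ∃ p : ↥S'ᶜ, IB.connectedComponentMk p = C₂ ∧ (p : V × Bool).1 ∈ Hset S' <;>
      simp only [Φ, h₁, h₂, dif_pos, dif_neg, not_false_iff] at hΦ
    · -- both have a half vertex
      rw [Sum.inl.injEq, Subtype.mk.injEq] at hΦ
      have hpq : h₁.choose = h₂.choose :=
        half_unique S' h₁.choose_spec.2 h₁.choose h₂.choose rfl hΦ.symm
      rw [← h₁.choose_spec.1, ← h₂.choose_spec.1, hpq]
    · exact absurd hΦ (by simp)
    · exact absurd hΦ (by simp)
    · -- both all-full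
      rw [Sum.inr.injEq] at hΦ
      push_neg at h₁
      obtain ⟨p₁, hp₁⟩ := C₁.exists_rep
      obtain ⟨p₂, hp₂⟩ := C₂.exists_rep
      have hp₁' : IB.connectedComponentMk p₁ = C₁ := hp₁
      have hp₂' : IB.connectedComponentMk p₂ = C₂ := hp₂
      have hfull₁ : ∀ r : ↥S'ᶜ, IB.connectedComponentMk r = C₁ → (r : V × Bool).1 ∉ Hset S' :=
        fun r hr => h₁ r hr
      have hmk : IG.connectedComponentMk (phi S' p₁) = IG.connectedComponentMk (phi S' p₂) := by
        rw [← fmap_mk, ← fmap_mk, hp₁', hp₂', hΦ]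
      obtain ⟨w⟩ := (ConnectedComponent.eq.mp hmk : IG.Reachable (phi S' p₁) (phi S' p₂))
      have hthis := key G S' w C₁ hfull₁ p₁ p₂ rfl rfl hp₁'
      rw [← hp₂']
      exact hthis.symm
  have hle : Nat.card IB.ConnectedComponent ≤
      Nat.card (↥(Hset S') ⊕ IG.ConnectedComponent) :=
    Nat.card_le_card_of_injective Φ hinj
  rw [Nat.card_sum, Nat.card_coe_set_eq] at hle
  exact hle

private lemma boundB [Fintype V] (G : SimpleGraph V) (S' : Set (V × Bool))
    (hk : ¬ 1 < numComp G (Wset S')) (hc : 1 < numComp (BGraph G) S') :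
    numComp (BGraph G) S' ≤ (Hset S').ncard := by
  classical
  set IB := (BGraph G).induce S'ᶜ with hIB
  set IG := G.induce (Wset S')ᶜ with hIG
  -- no component is all-full
  have hex : ∀ C : IB.ConnectedComponent,
      ∃ p : ↥S'ᶜ, IB.connectedComponentMk p = C ∧ (p : V × Bool).1 ∈ Hset S' := by
    intro C
    by_contra hall
    push_neg at hall
    have hfull : ∀ r : ↥S'ᶜ, IB.connectedComponentMk r = C → (r : V × Bool).1 ∉ Hset S' :=
      fun r hr => hall r hr
    obtain ⟨p, hp⟩ := C.exists_rep
    -- IG has at most one component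
    have hsub : Subsingleton IG.ConnectedComponent := by
      rw [← Finite.card_le_one_iff_subsingleton]
      exact Nat.not_lt.mp hk
    -- every surviving vertex lies in C
    have hallC : ∀ q : ↥S'ᶜ, IB.connectedComponentMk q = C := by
      intro q
      have hmk : IG.connectedComponentMk (phi S' p) = IG.connectedComponentMk (phi S' q) :=
        Subsingleton.elim _ _
      obtain ⟨w⟩ := (ConnectedComponent.eq.mp hmk : IG.Reachable (phi S' p) (phi S' q))
      exact key G S' w C hfull p q rfl rfl hp
    have : Subsingleton IB.ConnectedComponent := by
      constructor
      intro C₁ C₂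
      obtain ⟨q₁, hq₁⟩ := C₁.exists_rep
      obtain ⟨q₂, hq₂⟩ := C₂.exists_rep
      rw [← hq₁, ← hq₂]
      exact (hallC q₁).trans (hallC q₂).symm
    have h1 : Nat.card IB.ConnectedComponent ≤ 1 := Finite.card_le_one_iff_subsingleton.mpr this
    exact absurd hc (by simpa [numComp] using Nat.not_lt.mpr h1)
  let Ψ : IB.ConnectedComponent → ↥(Hset S') := fun C =>
    ⟨((hex C).choose : ↥S'ᶜ).1.1, (hex C).choose_spec.2⟩
  have hinj : Function.Injective Ψ := by
    intro C₁ C₂ hΨ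
    rw [Subtype.mk.injEq] at hΨ
    have hpq : (hex C₁).choose = (hex C₂).choose :=
      half_unique S' (hex C₁).choose_spec.2 _ _ rfl hΨ.symm
    rw [← (hex C₁).choose_spec.1, ← (hex C₂).choose_spec.1, hpq]
  have hle : Nat.card IB.ConnectedComponent ≤ Nat.card ↥(Hset S') :=
    Nat.card_le_card_of_injective Ψ hinj
  rw [Nat.card_coe_set_eq] at hle
  exact hle

/-- Let `0 < t ≤ 1/2` be a real number and let `G` be a connected `t`-tough
graph. Then `B(G)` is `2t`-tough, i.e. `ω(B(G)−S') ≤ |S'|/(2t)` for every cutset `S'`. -/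
theorem stmt_6 {V : Type*} [Fintype V] (G : SimpleGraph V) (t : ℝ)
    (ht0 : 0 < t) (ht : t ≤ 1 / 2) (hconn : G.Connected) (htough : IsTough t G) :
    ∀ S' : Set (V × Bool), IsCutset (BGraph G) S' →
      (numComp (BGraph G) S' : ℝ) ≤ (S'.ncard : ℝ) / (2 * t) := by
  classical
  intro S' hcut
  have h2t : (0 : ℝ) < 2 * t := by linarith
  rw [le_div_iff₀ h2t]
  have hcard : (S'.ncard : ℝ) = 2 * ((Wset S').ncard : ℝ) + ((Hset S').ncard : ℝ) := by
    exact_mod_cast card_S' S'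
  have hH0 : (0 : ℝ) ≤ ((Hset S').ncard : ℝ) := Nat.cast_nonneg _
  have hW0 : (0 : ℝ) ≤ ((Wset S').ncard : ℝ) := Nat.cast_nonneg _
  by_cases hk : IsCutset G (Wset S')
  · have htk := htough _ hk
    have hA : (numComp (BGraph G) S' : ℝ) ≤
        ((Hset S').ncard : ℝ) + (numComp G (Wset S') : ℝ) := by
      exact_mod_cast boundA G S'
    have hmul := mul_le_mul_of_nonneg_right hA h2t.le
    nlinarith [mul_nonneg hH0 (by linarith : (0:ℝ) ≤ 1 - 2 * t)]
  · have hB : (numComp (BGraph G) S' : ℝ) ≤ ((Hset S').ncard : ℝ) := by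
      exact_mod_cast boundB G S' hk hcut
    have hmul := mul_le_mul_of_nonneg_right hB h2t.le
    nlinarith [mul_nonneg hH0 (by linarith : (0:ℝ) ≤ 1 - 2 * t)]

end Toughness
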